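/- Let X be a real d×d matrix, P a real orthogonal d×d matrix, and Σ a real diagonal d×d matrix with nonnegative diagonal entries σ₁², …, σ_d², such that Xᵀ X = Pᵀ Σ P. Let O be any real orthogonal d×d matrix and for i < j set G_{ij} := Pᵀ (E_{ij} − E_{ji}) P O. Then for all i < j and k < l, tr( (X G_{ij}) (X G_{kl})ᵀ ) = (σ_i² + σ_j²) if (i,j) = (k,l), and = 0 otherwise. -/

import Mathlib

open scoped Matrix
open Matrix

lemma trace_std_mul (d : ℕ) (a b : Fin d) (M : Matrix (Fin d) (Fin d) ℝ) :
    Matrix.trace (Matrix.single a b 1 * M) = M b a := by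
  simp [Matrix.trace, Matrix.mul_apply, Matrix.single, Matrix.diag,
    Finset.sum_ite_eq, ite_and]

lemma trace_std_std_diag (d : ℕ) (a b c e : Fin d) (s : Fin d → ℝ) :
    Matrix.trace (Matrix.single a b 1 * (Matrix.single c e 1 * Matrix.diagonal s))
      = if b = c ∧ a = e then s a else 0 := by
  rw [trace_std_mul]
  simp only [Matrix.mul_apply, Matrix.single, Matrix.diagonal, Matrix.of_apply]
  rw [Finset.sum_eq_single a]
  · by_cases h1 : b = c <;> by_cases h2 : a = e <;> simp [h1, h2] <;> aesop
  · intro x _ hx; simp [hx, Ne.symm hx]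
  · simp

lemma std_transpose (d : ℕ) (a b : Fin d) :
    (Matrix.single a b (1 : ℝ))ᵀ = Matrix.single b a 1 := by
  ext x y
  simp [Matrix.single, and_comm]

/-- Let `X` be a real `d×d` matrix, `P` orthogonal, and `Σ = diagonal s`
with nonnegative entries `s i = σ_i²`, such that `Xᵀ X = Pᵀ Σ P`.  Let `O` be orthogonal
and set `G i j := Pᵀ (E i j - E j i) P O` for `i < j`.  Then for `i < j` and `k < l`,
`tr((X G i j)(X G k l)ᵀ) = σ_i² + σ_j²` if `(i,j) = (k,l)`, and `= 0` otherwise. -/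
theorem pullback_metric_right_orthogonal_action
    (d : ℕ) (X P O : Matrix (Fin d) (Fin d) ℝ)
    (hP : Pᵀ * P = 1) (hP' : P * Pᵀ = 1)
    (hO : Oᵀ * O = 1) (hO' : O * Oᵀ = 1)
    (s : Fin d → ℝ) (hs : ∀ i, 0 ≤ s i)
    (hX : Xᵀ * X = Pᵀ * Matrix.diagonal s * P)
    (i j k m : Fin d) (hij : i < j) (hkm : k < m) :
    Matrix.trace
        ((X * (Pᵀ * (Matrix.single i j (1 : ℝ) - Matrix.single j i 1) * P * O))
          * (X * (Pᵀ * (Matrix.single k m (1 : ℝ) - Matrix.single m k 1) * P * O))ᵀ)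
      = if (i, j) = (k, m) then s i + s j else 0 := by
  have cancel : ∀ (Q R A B : Matrix (Fin d) (Fin d) ℝ), Q * R = 1 →
      A * Q * (R * B) = A * B := by
    intro Q R A B h
    rw [Matrix.mul_assoc, ← Matrix.mul_assoc Q, h, Matrix.one_mul]
  set G := Matrix.single i j (1 : ℝ) - Matrix.single j i 1 with hG
  set H := Matrix.single k m (1 : ℝ) - Matrix.single m k 1 with hH
  have key : Matrix.trace
      ((X * (Pᵀ * G * P * O)) * (X * (Pᵀ * H * P * O))ᵀ)
      = Matrix.trace (G * (Hᵀ * Matrix.diagonal s)) := by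
    have h1 : (X * (Pᵀ * H * P * O))ᵀ = Oᵀ * (Pᵀ * Hᵀ * P * Xᵀ) := by
      simp [Matrix.transpose_mul, Matrix.mul_assoc]
    rw [h1]
    have h2 : X * (Pᵀ * G * P * O) * (Oᵀ * (Pᵀ * Hᵀ * P * Xᵀ))
        = X * (Pᵀ * G * (Hᵀ * (P * Xᵀ))) := by
      rw [show X * (Pᵀ * G * P * O) = X * (Pᵀ * G) * P * O by
            simp [Matrix.mul_assoc],
          cancel O Oᵀ _ _ hO']
      rw [show Pᵀ * Hᵀ * P * Xᵀ = Pᵀ * (Hᵀ * (P * Xᵀ)) by simp [Matrix.mul_assoc],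
          cancel P Pᵀ _ _ hP']
      simp [Matrix.mul_assoc]
    rw [h2, Matrix.trace_mul_comm]
    rw [show Pᵀ * G * (Hᵀ * (P * Xᵀ)) * X = Pᵀ * (G * Hᵀ) * (P * (Xᵀ * X)) by
          simp [Matrix.mul_assoc]]
    rw [hX]
    rw [show P * (Pᵀ * Matrix.diagonal s * P) = P * Pᵀ * (Matrix.diagonal s * P) by
          simp [Matrix.mul_assoc], hP', Matrix.one_mul]
    rw [show Pᵀ * (G * Hᵀ) * (Matrix.diagonal s * P)
          = Pᵀ * (G * Hᵀ * Matrix.diagonal s * P) by simp [Matrix.mul_assoc]]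
    rw [Matrix.trace_mul_comm, Matrix.mul_assoc _ P Pᵀ, hP', Matrix.mul_one]
    simp [Matrix.mul_assoc]
  rw [key, hG, hH]
  rw [Matrix.transpose_sub, std_transpose, std_transpose]
  simp only [Matrix.sub_mul, Matrix.mul_sub, Matrix.trace_sub, trace_std_std_diag]
  have hne1 : ¬ (j = k ∧ i = m) := by
    rintro ⟨rfl, rfl⟩; exact absurd (hij.trans hkm) (lt_irrefl _)
  have hne2 : ¬ (i = m ∧ j = k) := fun h => hne1 ⟨h.2, h.1⟩
  rw [if_neg hne1, if_neg hne2]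
  simp only [Prod.mk.injEq, sub_zero, zero_sub, sub_neg_eq_add]
  by_cases h : i = k ∧ j = m
  · obtain ⟨rfl, rfl⟩ := h
    simp
  · rw [if_neg h, if_neg h, if_neg (by tauto : ¬ (j = m ∧ i = k))]
    ring
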